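/- The functional E(V | Ṽ) = sup_{φ ∈ C_b(X)} { V(φ) − Ṽ(e^φ − 1) } is nonnegative, and E(V | Ṽ) = 0 if and only if V = Ṽ. -/

import Mathlib

open MeasureTheory
open scoped NNReal ENNReal

/-- The extended relative entropy functional for finite positive measures, defined via the
dual variational formula `E(V | Ṽ) = sup_{φ ∈ C_b(X)} { V(φ) − Ṽ(e^φ − 1) }`. -/
noncomputable def Efun {X : Type*} [MeasurableSpace X] [TopologicalSpace X]
    (V W : Measure X) : EReal :=
  ⨆ φ : BoundedContinuousFunction X ℝ,
    ((∫ x, φ x ∂V - ∫ x, (Real.exp (φ x) - 1) ∂W : ℝ) : EReal)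

section aux

variable {X : Type*} [MeasurableSpace X] [TopologicalSpace X] [OpensMeasurableSpace X]

/-- `x ↦ exp (φ x) - 1` as a bounded continuous function. -/
noncomputable def expSub (φ : BoundedContinuousFunction X ℝ) : BoundedContinuousFunction X ℝ :=
  BoundedContinuousFunction.ofNormedAddCommGroup (fun x => Real.exp (φ x) - 1)
    (by fun_prop) (Real.exp ‖φ‖ + 1) (by
      intro x
      have h1 : Real.exp (φ x) ≤ Real.exp ‖φ‖ :=
        Real.exp_le_exp.mpr ((le_abs_self _).trans (φ.norm_coe_le_norm x))
      have h2 : (0:ℝ) < Real.exp (φ x) := Real.exp_pos _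
      have h3 : |Real.exp (φ x) - 1| ≤ Real.exp ‖φ‖ + 1 := by
        rw [abs_le]; constructor <;> nlinarith [Real.exp_pos ‖φ‖]
      simpa [Real.norm_eq_abs] using h3)

lemma expSub_apply (φ : BoundedContinuousFunction X ℝ) (x : X) :
    expSub φ x = Real.exp (φ x) - 1 := rfl

lemma integrable_expSub (φ : BoundedContinuousFunction X ℝ) (μ : Measure X)
    [IsFiniteMeasure μ] : Integrable (fun x => Real.exp (φ x) - 1) μ := by
  exact (expSub φ).integrable μ

/-- From `∀ φ, ∫ φ dV ≤ ∫ (e^φ - 1) dW` we get `∫ ψ dV ≤ ∫ ψ dW`. -/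
lemma integral_le_of_key (V W : Measure X) [IsFiniteMeasure V] [IsFiniteMeasure W]
    (h : ∀ φ : BoundedContinuousFunction X ℝ,
      ∫ x, φ x ∂V ≤ ∫ x, (Real.exp (φ x) - 1) ∂W)
    (ψ : BoundedContinuousFunction X ℝ) :
    ∫ x, ψ x ∂V ≤ ∫ x, ψ x ∂W := by
  set K : ℝ := ‖ψ‖ ^ 2 * (W Set.univ).toReal with hK
  have hK0 : 0 ≤ K := by positivity
  have key : ∀ t : ℝ, 0 < t → t ≤ 1 → t * ‖ψ‖ ≤ 1 →
      ∫ x, ψ x ∂V - ∫ x, ψ x ∂W ≤ t * K := by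
    intro t ht ht1 htψ
    have h1 := h (t • ψ)
    have hts : ∀ x, (t • ψ) x = t * ψ x := fun x => rfl
    have hint1 : ∫ x, (t • ψ) x ∂V = t * ∫ x, ψ x ∂V := by
      simp_rw [hts]
      exact integral_const_mul t _
    -- pointwise bound : exp (t ψ x) - 1 ≤ t * ψ x + t^2 * ‖ψ‖^2
    have hpt : ∀ x, Real.exp (t * ψ x) - 1 ≤ t * ψ x + t ^ 2 * ‖ψ‖ ^ 2 := by
      intro x
      have habs : |t * ψ x| ≤ 1 := by
        rw [abs_mul, abs_of_pos ht]
        calc t * |ψ x| ≤ t * ‖ψ‖ := by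
              have := ψ.norm_coe_le_norm x
              rw [Real.norm_eq_abs] at this
              nlinarith
          _ ≤ 1 := htψ
      have hb := Real.abs_exp_sub_one_sub_id_le habs
      have hb2 : Real.exp (t * ψ x) - 1 - t * ψ x ≤ (t * ψ x) ^ 2 :=
        (abs_le.mp hb).2
      have hsq : (t * ψ x) ^ 2 ≤ t ^ 2 * ‖ψ‖ ^ 2 := by
        have hn := ψ.norm_coe_le_norm x
        rw [Real.norm_eq_abs] at hn
        have h2 : (ψ x) ^ 2 ≤ ‖ψ‖ ^ 2 := by
          rw [← sq_abs (ψ x)]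
          exact pow_le_pow_left₀ (abs_nonneg _) hn 2
        rw [mul_pow]
        exact mul_le_mul_of_nonneg_left h2 (sq_nonneg t)
      linarith
    have hint2 : ∫ x, (Real.exp ((t • ψ) x) - 1) ∂W ≤
        t * ∫ x, ψ x ∂W + t ^ 2 * K := by
      have hInt1 : Integrable (fun x => Real.exp ((t • ψ) x) - 1) W :=
        integrable_expSub (t • ψ) W
      have hInt2 : Integrable (fun x => t * ψ x + t ^ 2 * ‖ψ‖ ^ 2) W := by
        exact ((ψ.integrable W).const_mul t).add (integrable_const _)
      have := integral_mono hInt1 hInt2 (fun x => by simpa [hts] using hpt x)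
      calc ∫ x, (Real.exp ((t • ψ) x) - 1) ∂W
          ≤ ∫ x, (t * ψ x + t ^ 2 * ‖ψ‖ ^ 2) ∂W := this
        _ = t * ∫ x, ψ x ∂W + t ^ 2 * K := by
            rw [integral_add (((ψ.integrable W)).const_mul t) (integrable_const _),
              integral_const_mul, integral_const, hK, smul_eq_mul, measureReal_def]
            ring
    have := h1.trans hint2
    rw [hint1] at this
    have ht2 : t ^ 2 * K ≤ t * K := by
      have htt : t ^ 2 ≤ t := by nlinarith
      exact mul_le_mul_of_nonneg_right htt hK0
    have : t * ∫ x, ψ x ∂V ≤ t * ∫ x, ψ x ∂W + t * K := by linarith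
    nlinarith
  -- conclude by letting t → 0
  have hle : ∫ x, ψ x ∂V - ∫ x, ψ x ∂W ≤ 0 := by
    refine le_of_forall_pos_le_add (fun ε hε => ?_)
    set t : ℝ := min (min 1 (1 / (‖ψ‖ + 1))) (ε / (K + 1)) with htdef
    have hψ1 : (0:ℝ) < ‖ψ‖ + 1 := by positivity
    have htpos : 0 < t := by
      apply lt_min (lt_min one_pos (by positivity)) (by positivity)
    have ht1 : t ≤ 1 := le_trans (min_le_left _ _) (min_le_left _ _)
    have htψ : t * ‖ψ‖ ≤ 1 := by
      have h2 : t ≤ 1 / (‖ψ‖ + 1) := le_trans (min_le_left _ _) (min_le_right _ _)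
      have hn : 0 ≤ ‖ψ‖ := norm_nonneg _
      calc t * ‖ψ‖ ≤ (1 / (‖ψ‖ + 1)) * ‖ψ‖ := by nlinarith
        _ ≤ 1 := by rw [div_mul_eq_mul_div, one_mul, div_le_one hψ1]; linarith
    have htK : t * K ≤ ε := by
      have h2 : t ≤ ε / (K + 1) := min_le_right _ _
      have hKp : (0:ℝ) < K + 1 := by linarith
      calc t * K ≤ (ε / (K + 1)) * K := by nlinarith
        _ ≤ ε := by
            rw [div_mul_eq_mul_div, div_le_iff₀ hKp]
            nlinarith
    have := key t htpos ht1 htψ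
    linarith
  linarith

end aux

/-- `E(V | Ṽ)` is nonnegative, and vanishes if and only if `V = Ṽ`. -/
theorem Efun_nonneg_and_eq_zero_iff {X : Type*} [MeasurableSpace X] [TopologicalSpace X]
    [PolishSpace X] [BorelSpace X] (V W : Measure X)
    [IsFiniteMeasure V] [IsFiniteMeasure W] :
    0 ≤ Efun V W ∧ (Efun V W = 0 ↔ V = W) := by
  have h0 : (0 : EReal) ≤ Efun V W := by
    unfold Efun
    have := le_iSup (fun φ : BoundedContinuousFunction X ℝ =>
      ((∫ x, φ x ∂V - ∫ x, (Real.exp (φ x) - 1) ∂W : ℝ) : EReal))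
      (0 : BoundedContinuousFunction X ℝ)
    simpa using this
  refine ⟨h0, ?_, ?_⟩
  · -- Efun V W = 0 → V = W
    intro hE
    have hle : ∀ φ : BoundedContinuousFunction X ℝ,
        ∫ x, φ x ∂V ≤ ∫ x, (Real.exp (φ x) - 1) ∂W := by
      intro φ
      have : ((∫ x, φ x ∂V - ∫ x, (Real.exp (φ x) - 1) ∂W : ℝ) : EReal) ≤ Efun V W := by
        unfold Efun
        exact le_iSup (fun φ : BoundedContinuousFunction X ℝ =>
          ((∫ x, φ x ∂V - ∫ x, (Real.exp (φ x) - 1) ∂W : ℝ) : EReal)) φ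
      rw [hE] at this
      have h' : (∫ x, φ x ∂V - ∫ x, (Real.exp (φ x) - 1) ∂W : ℝ) ≤ 0 := by
        exact_mod_cast this
      linarith
    have heq : ∀ ψ : BoundedContinuousFunction X ℝ, ∫ x, ψ x ∂V = ∫ x, ψ x ∂W := by
      intro ψ
      have h1 := integral_le_of_key V W hle ψ
      have h2 := integral_le_of_key V W hle (-ψ)
      simp only [BoundedContinuousFunction.coe_neg, Pi.neg_apply, integral_neg,
        neg_le_neg_iff] at h2
      linarith
    -- conclude via lintegrals of nonnegative bounded continuous functions
    apply ext_of_forall_lintegral_eq_of_IsFiniteMeasure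
    intro f
    set g : BoundedContinuousFunction X ℝ :=
      BoundedContinuousFunction.ofNormedAddCommGroup (fun x => (f x : ℝ))
        (NNReal.continuous_coe.comp f.continuous) ((nndist f 0 : ℝ≥0) : ℝ) (by
          intro x
          have h1 : ((f x) : ℝ) ≤ ((nndist f 0 : ℝ≥0) : ℝ) := by
            have := BoundedContinuousFunction.apply_le_nndist_zero f x
            rw [nndist_comm] at this
            exact NNReal.coe_le_coe.mpr this
          calc ‖((f x : ℝ≥0) : ℝ)‖ = ((f x) : ℝ) := by
                rw [Real.norm_eq_abs]
                exact abs_of_nonneg (f x).coe_nonneg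
            _ ≤ _ := h1) with hg
    have hgx : ∀ x, g x = (f x : ℝ) := fun x => rfl
    have h1 : (∫⁻ x, (f x : ENNReal) ∂V).toReal = (∫⁻ x, (f x : ENNReal) ∂W).toReal := by
      rw [BoundedContinuousFunction.toReal_lintegral_coe_eq_integral,
        BoundedContinuousFunction.toReal_lintegral_coe_eq_integral]
      have := heq g
      simpa [hgx] using this
    exact (ENNReal.toReal_eq_toReal_iff' (f.lintegral_lt_top_of_nnreal V).ne
      (f.lintegral_lt_top_of_nnreal W).ne).mp h1
  · -- V = W → Efun V W = 0
    rintro rfl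
    refine le_antisymm ?_ h0
    unfold Efun
    refine iSup_le fun φ => ?_
    have hle : ∫ x, φ x ∂V ≤ ∫ x, (Real.exp (φ x) - 1) ∂V := by
      apply integral_mono (φ.integrable V) (integrable_expSub φ V)
      intro x
      have := Real.add_one_le_exp (φ x)
      simp only
      linarith
    have h : (∫ x, φ x ∂V - ∫ x, (Real.exp (φ x) - 1) ∂V : ℝ) ≤ 0 := by linarith
    exact_mod_cast h
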